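/- Set λ = −√6 and let γ be any real number. Define the shifted map components X̄(X,Y) = W₁(−1 + X, Y) + 1 and Ȳ(X,Y) = W₂(−1 + X, Y), which fix the origin (corresponding to the fixed point C = (−1,0)). Define ψ(Y) = Y²/2. Then: (i) the center-manifold invariance residual R(Y) = ψ(Ȳ(ψ(Y), Y)) − X̄(ψ(Y), Y) satisfies R(Y) = O(Y⁴) as Y → 0; (ii) the reduced map satisfies Ȳ(ψ(Y), Y) = Y − (3/2)·Y³ + O(Y⁵) as Y → 0. -/
import Mathlib


open Asymptotics Filter

noncomputable def f (γ lam x y : ℝ) : ℝ :=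
  (3/2) * x * (2*x^2 + γ*(1 - x^2 - y^2)) - 3*x + Real.sqrt (3/2) * lam * y^2

noncomputable def g (γ lam x y : ℝ) : ℝ :=
  (3/2) * y * (2*x^2 + γ*(1 - x^2 - y^2)) - Real.sqrt (3/2) * lam * x * y

/-- The unit-step Euler discretization map W(x,y) = (x + f(x,y), y + g(x,y)). -/
noncomputable def W (γ lam : ℝ) (p : ℝ × ℝ) : ℝ × ℝ :=
  (p.1 + f γ lam p.1 p.2, p.2 + g γ lam p.1 p.2)

/-- The map W with λ = −√6, shifted so that the fixed point C = (−1,0) is at the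
origin: first component. -/
noncomputable def Xbar (γ X Y : ℝ) : ℝ := (W γ (-Real.sqrt 6) (-1 + X, Y)).1 + 1

/-- The shifted map: second component. -/
noncomputable def Ybar (γ X Y : ℝ) : ℝ := (W γ (-Real.sqrt 6) (-1 + X, Y)).2

/-- The approximate center manifold X = ψ(Y) = Y²/2 at C for λ = −√6. -/
noncomputable def ψ (Y : ℝ) : ℝ := Y^2/2

lemma sqrt_key : Real.sqrt (3/2) * -Real.sqrt 6 = -3 := by
  have h : Real.sqrt (3/2) * Real.sqrt 6 = 3 := by
    rw [← Real.sqrt_mul (by norm_num) 6]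
    rw [show (3:ℝ)/2 * 6 = 9 by norm_num]
    rw [show (9:ℝ) = 3^2 by norm_num, Real.sqrt_sq (by norm_num)]
  linarith [h]

/-- residual factor polynomial -/
noncomputable def q (γ Y : ℝ) : ℝ :=
  (3/4 - 3/8*γ) + (3/2 - 3/16*γ)*Y^2 + (-9/8 + 9/16*γ)*Y^4
    + (9/32 - 9/32*γ + 9/128*γ^2)*Y^6

lemma hR (γ Y : ℝ) : ψ (Ybar γ (ψ Y) Y) - Xbar γ (ψ Y) Y = Y^4 * q γ Y := by
  simp only [ψ, Ybar, Xbar, W, f, g, q, sqrt_key]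
  ring

lemma hD (γ Y : ℝ) : Ybar γ (ψ Y) Y - (Y - (3/2)*Y^3) = Y^5 * (3/4 - 3/8*γ) := by
  simp only [ψ, Ybar, W, g, sqrt_key]
  ring

/-- For λ = −√6: (i) the center-manifold invariance residual is O(Y⁴);
(ii) the reduced map is Y − (3/2)Y³ + O(Y⁵). -/
theorem stmt_15 (γ : ℝ) :
    (fun Y : ℝ => ψ (Ybar γ (ψ Y) Y) - Xbar γ (ψ Y) Y) =O[nhds (0:ℝ)]
      (fun Y : ℝ => Y^4) ∧
    (fun Y : ℝ => Ybar γ (ψ Y) Y - (Y - (3/2)*Y^3)) =O[nhds (0:ℝ)]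
      (fun Y : ℝ => Y^5) := by
  constructor
  · have hq : Filter.Tendsto (fun Y => q γ Y) (nhds (0:ℝ)) (nhds (q γ 0)) := by
      apply Continuous.tendsto
      unfold q; continuity
    calc (fun Y : ℝ => ψ (Ybar γ (ψ Y) Y) - Xbar γ (ψ Y) Y)
        = fun Y : ℝ => Y^4 * q γ Y := funext (hR γ)
      _ =O[nhds (0:ℝ)] fun Y : ℝ => Y^4 * 1 :=
          (isBigO_refl (fun Y : ℝ => Y^4) _).mul (hq.isBigO_one ℝ)
      _ = fun Y : ℝ => Y^4 := by funext Y; ring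
  · calc (fun Y : ℝ => Ybar γ (ψ Y) Y - (Y - (3/2)*Y^3))
        = fun Y : ℝ => Y^5 * (3/4 - 3/8*γ) := funext (hD γ)
      _ =O[nhds (0:ℝ)] fun Y : ℝ => Y^5 * 1 :=
          (isBigO_refl (fun Y : ℝ => Y^5) _).mul (isBigO_const_const _ one_ne_zero _)
      _ = fun Y : ℝ => Y^5 := by funext Y; ring
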